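/- If a permutation σ is covered by τ in the right weak Bruhat order on S_n (i.e. τ = σ·s_i with ℓ(τ) = ℓ(σ)+1), then |Des_L(τ) \ Des_L(σ)| ≤ 1. -/

import Mathlib

/-- `u` is the one-line word of a permutation of `{1, …, n}`. -/
def IsPermWord (n : ℕ) (u : List ℕ) : Prop := u.Perm (List.range' 1 n)

/-- The left inversion set of a word `u`:
pairs `(i, j)` of letters of `u` with `i < j` such that `j` occurs before `i` in `u`
(i.e. `u⁻¹(i) > u⁻¹(j)`). -/
def InvW (u : List ℕ) : Set (ℕ × ℕ) :=
  {p | p.1 < p.2 ∧ p.1 ∈ u ∧ p.2 ∈ u ∧ u.idxOf p.2 < u.idxOf p.1}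

/-- The left descent set of a word: letters `i` such that `i + 1` occurs before `i`. -/
def DesLW (u : List ℕ) : Set ℕ :=
  {i | i ∈ u ∧ i + 1 ∈ u ∧ u.idxOf (i + 1) < u.idxOf i}

/-- The covering relation of the right weak Bruhat order on one-line words:
`w = u · sᵢ` where the letters in positions `i, i+1` of `u` are increasing. -/
def WeakCovW (u w : List ℕ) : Prop :=
  ∃ (l₁ l₂ : List ℕ) (x y : ℕ), x < y ∧ u = l₁ ++ x :: y :: l₂ ∧ w = l₁ ++ y :: x :: l₂

/-- Auxiliary: the index of a letter in a list of the form `l₁ ++ a :: b :: l₂`. -/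
lemma idx_mid {l₁ l₂ : List ℕ} {a b z : ℕ} (hz : z ∈ l₁ ++ a :: b :: l₂) :
    (l₁ ++ a :: b :: l₂).idxOf z =
      if z ∈ l₁ then l₁.idxOf z
      else if z = a then l₁.length
      else if z = b then l₁.length + 1
      else l₁.length + 2 + l₂.idxOf z := by
  by_cases h1 : z ∈ l₁
  · simp [List.idxOf_append_of_mem h1, h1]
  · rw [List.idxOf_append_of_notMem h1]
    simp only [h1, if_false]
    by_cases h2 : z = a
    · subst h2; simp [List.idxOf_cons_self]
    · rw [List.idxOf_cons_ne _ (Ne.symm h2)]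
      by_cases h3 : z = b
      · subst h3; simp [h2, List.idxOf_cons_self]
      · rw [List.idxOf_cons_ne _ (Ne.symm h3)]
        simp [h2, h3]; omega

/-- If `σ` is covered by `τ` in the right weak Bruhat order on `Sₙ`
(`τ = σ·sᵢ` with `σ(i) < σ(i+1)`), then `|Des_L(τ) \ Des_L(σ)| ≤ 1`. -/
theorem cover_adds_at_most_one_descent (n : ℕ) (σ τ : List ℕ)
    (hσ : IsPermWord n σ) (hτ : IsPermWord n τ)
    (hcov : WeakCovW σ τ) :
    (DesLW τ \ DesLW σ).ncard ≤ 1 := by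
  obtain ⟨l₁, l₂, x, y, hxy, hσe, hτe⟩ := hcov
  have hsub : DesLW τ \ DesLW σ ⊆ {x} := by
    intro i hi
    obtain ⟨⟨hiτ, hi1τ, hlt⟩, hni⟩ := hi
    have hperm : σ.Perm τ := by
      rw [hσe, hτe]
      exact List.Perm.append_left l₁ (List.Perm.swap y x l₂)
    have hiσ : i ∈ σ := hperm.mem_iff.mpr hiτ
    have hi1σ : i + 1 ∈ σ := hperm.mem_iff.mpr hi1τ
    have hge : ¬ σ.idxOf (i + 1) < σ.idxOf i := fun h => hni ⟨hiσ, hi1σ, h⟩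
    rw [hσe] at hiσ hi1σ hge
    rw [hτe] at hiτ hi1τ hlt
    rw [idx_mid hiσ, idx_mid hi1σ] at hge
    rw [idx_mid hiτ, idx_mid hi1τ] at hlt
    have c1 : i ∈ l₁ → l₁.idxOf i < l₁.length := List.idxOf_lt_length_iff.mpr
    have c2 : i + 1 ∈ l₁ → l₁.idxOf (i + 1) < l₁.length := List.idxOf_lt_length_iff.mpr
    show i ∈ ({x} : Set ℕ)
    simp only [Set.mem_singleton_iff]
    split_ifs at hlt hge <;> (try replace c1 := c1 ‹i ∈ l₁›) <;>
      (try replace c2 := c2 ‹i + 1 ∈ l₁›) <;> omega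
  calc (DesLW τ \ DesLW σ).ncard ≤ ({x} : Set ℕ).ncard :=
        Set.ncard_le_ncard hsub (Set.finite_singleton x)
    _ = 1 := Set.ncard_singleton x
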